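/- In the symmetric coercive setting, the pressure component of the solution of the mixed problem satisfies ‖p‖_Q ≤ (1/β)‖f ∘ Π_{K_a^⊥}‖_{V'} + (‖a‖/β²)‖g‖_{Q'} ≤ (1/β)(‖a‖/α)^{1/2}‖f‖_{(K_a^⊥)'} + (‖a‖/β²)‖g‖_{Q'}, where Π_{K_a^⊥} is the a-orthogonal projection onto K_a^⊥ := {v : a(v,w)=0 ∀w∈K}. -/

import Mathlib

open Set

/-- Dual (semi) norm of a functional `f : V → ℝ`, tested only on the subset `U`. -/
noncomputable def dualSemiNorm {V : Type*} [NormedAddCommGroup V] (U : Set V) (f : V → ℝ) : ℝ :=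
  sSup ((fun v => |f v| / ‖v‖) '' (U \ {0}))

set_option maxHeartbeats 1000000

/-- Refined stability estimate for `p` in the symmetric coercive case:
`‖p‖ ≤ (1/β)‖f ∘ Π_{K_a^⊥}‖_{V'} + (‖a‖/β²)‖g‖
     ≤ (1/β)(‖a‖/α)^{1/2}‖f‖_{(K_a^⊥)'} + (‖a‖/β²)‖g‖`. -/
theorem stmt7
    {V Q : Type*} [NormedAddCommGroup V] [InnerProductSpace ℝ V] [CompleteSpace V]
    [NormedAddCommGroup Q] [InnerProductSpace ℝ Q] [CompleteSpace Q]
    (a : V →L[ℝ] V →L[ℝ] ℝ) (b : V →L[ℝ] Q →L[ℝ] ℝ)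
    (hsym : ∀ v w : V, a v w = a w v)
    (α : ℝ) (hα : 0 < α) (hcoer : ∀ v : V, a v v ≥ α * ‖v‖ ^ 2)
    (K : Set V) (hK : K = {v : V | ∀ q : Q, b v q = 0})
    (Kaperp : Set V) (hKaperp : Kaperp = {v : V | ∀ w ∈ K, a v w = 0})
    (P : V → V)
    (hproj : ∀ v : V, P v ∈ Kaperp ∧ v - P v ∈ K)
    (β : ℝ) (hβ : 0 < β)
    (hBsurj : ∀ h : Q →L[ℝ] ℝ, ∃ v : V, b v = h ∧ ‖v‖ ≤ (1 / β) * ‖h‖)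
    (f : V →L[ℝ] ℝ) (g : Q →L[ℝ] ℝ) (u : V) (p : Q)
    (hsol1 : ∀ v : V, a u v + b v p = f v) (hsol2 : ∀ q : Q, b u q = g q) :
    ‖p‖ ≤ (1 / β) * dualSemiNorm Set.univ (fun v => f (P v)) + (‖a‖ / β ^ 2) * ‖g‖
    ∧ (1 / β) * dualSemiNorm Set.univ (fun v => f (P v)) + (‖a‖ / β ^ 2) * ‖g‖
      ≤ (1 / β) * Real.sqrt (‖a‖ / α) * dualSemiNorm Kaperp (fun v => f v)
        + (‖a‖ / β ^ 2) * ‖g‖ := by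
  -- basic positivity facts
  have ha_nonneg : ∀ v : V, 0 ≤ a v v := fun v => le_trans (by positivity) (hcoer v)
  have ha_bound : ∀ v w : V, |a v w| ≤ ‖a‖ * ‖v‖ * ‖w‖ := by
    intro v w
    calc |a v w| = ‖a v w‖ := rfl
      _ ≤ ‖a v‖ * ‖w‖ := (a v).le_opNorm w
      _ ≤ (‖a‖ * ‖v‖) * ‖w‖ := by
          exact mul_le_mul_of_nonneg_right (a.le_opNorm v) (norm_nonneg w)
  have ha_diag : ∀ v : V, a v v ≤ ‖a‖ * ‖v‖ ^ 2 := by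
    intro v
    have := ha_bound v v
    have h2 := le_abs_self (a v v)
    nlinarith [norm_nonneg v]
  -- Cauchy-Schwarz for the bilinear form a
  have hCS : ∀ x y : V, |a x y| ≤ Real.sqrt (a x x) * Real.sqrt (a y y) := by
    intro x y
    have hexp : ∀ t : ℝ, a (x + t • y) (x + t • y)
        = a y y * (t * t) + (2 * a x y) * t + a x x := by
      intro t
      simp only [map_add, map_smul, ContinuousLinearMap.add_apply,
        ContinuousLinearMap.coe_smul', Pi.smul_apply, smul_eq_mul]
      rw [hsym y x]; ring
    have hd := discrim_le_zero (a := a y y) (b := 2 * a x y) (c := a x x)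
      (fun t => by rw [← hexp t]; exact ha_nonneg _)
    rw [discrim] at hd
    have hsq : (a x y) ^ 2 ≤ a x x * a y y := by nlinarith
    calc |a x y| = Real.sqrt ((a x y) ^ 2) := (Real.sqrt_sq_eq_abs _).symm
      _ ≤ Real.sqrt (a x x * a y y) := Real.sqrt_le_sqrt hsq
      _ = Real.sqrt (a x x) * Real.sqrt (a y y) := Real.sqrt_mul (ha_nonneg x) _
  -- a (P v) (P v) ≤ a v v
  have hPdiag : ∀ v : V, a (P v) (P v) ≤ a v v := by
    intro v
    obtain ⟨h1, h2⟩ := hproj v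
    rw [hKaperp] at h1
    have hc1 : a (P v) (v - P v) = 0 := h1 _ h2
    have hc2 : a (v - P v) (P v) = 0 := by rw [hsym]; exact hc1
    have hpos := ha_nonneg (v - P v)
    have hv : a v v = a (P v) (P v) + a (P v) (v - P v) + a (v - P v) (P v)
        + a (v - P v) (v - P v) := by
      have heq : P v + (v - P v) = v := by abel
      calc a v v = a (P v + (v - P v)) (P v + (v - P v)) := by rw [heq]
        _ = _ := by
            simp only [map_add, ContinuousLinearMap.add_apply]; ring
    linarith
  -- norm bound for the projection
  have hPnorm : ∀ v : V, ‖P v‖ ≤ Real.sqrt (‖a‖ / α) * ‖v‖ := by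
    intro v
    have h1 : α * ‖P v‖ ^ 2 ≤ a (P v) (P v) := hcoer (P v)
    have h2 : a v v ≤ ‖a‖ * ‖v‖ ^ 2 := ha_diag v
    have h3 : ‖P v‖ ^ 2 ≤ (‖a‖ / α) * ‖v‖ ^ 2 := by
      rw [div_mul_eq_mul_div, le_div_iff₀ hα]
      nlinarith [hPdiag v]
    calc ‖P v‖ = Real.sqrt (‖P v‖ ^ 2) := (Real.sqrt_sq (norm_nonneg _)).symm
      _ ≤ Real.sqrt ((‖a‖ / α) * ‖v‖ ^ 2) := Real.sqrt_le_sqrt h3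
      _ = Real.sqrt (‖a‖ / α) * ‖v‖ := by
          rw [Real.sqrt_mul (by positivity), Real.sqrt_sq (norm_nonneg _)]
  -- the two dual seminorms: sets, bddAbove, nonneg
  set S1 : Set ℝ := (fun v => |f (P v)| / ‖v‖) '' (Set.univ \ {0}) with hS1
  set S2 : Set ℝ := (fun v => |f v| / ‖v‖) '' (Kaperp \ {0}) with hS2
  have hD1 : dualSemiNorm Set.univ (fun v => f (P v)) = sSup S1 := rfl
  have hD2 : dualSemiNorm Kaperp (fun v => f v) = sSup S2 := rfl
  have hS1bdd : BddAbove S1 := by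
    refine ⟨‖f‖ * Real.sqrt (‖a‖ / α), ?_⟩
    rintro x ⟨v, ⟨-, hv0⟩, rfl⟩
    simp only [Set.mem_singleton_iff] at hv0
    have hvpos : (0:ℝ) < ‖v‖ := norm_pos_iff.mpr hv0
    rw [div_le_iff₀ hvpos]
    calc |f (P v)| ≤ ‖f‖ * ‖P v‖ := (f.le_opNorm (P v))
      _ ≤ ‖f‖ * (Real.sqrt (‖a‖ / α) * ‖v‖) :=
          mul_le_mul_of_nonneg_left (hPnorm v) (norm_nonneg f)
      _ = ‖f‖ * Real.sqrt (‖a‖ / α) * ‖v‖ := by ring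
  have hS2bdd : BddAbove S2 := by
    refine ⟨‖f‖, ?_⟩
    rintro x ⟨v, ⟨-, hv0⟩, rfl⟩
    simp only [Set.mem_singleton_iff] at hv0
    have hvpos : (0:ℝ) < ‖v‖ := norm_pos_iff.mpr hv0
    rw [div_le_iff₀ hvpos]
    exact f.le_opNorm v
  have hD1nonneg : 0 ≤ sSup S1 := by
    apply Real.sSup_nonneg
    rintro x ⟨v, -, rfl⟩
    positivity
  have hD2nonneg : 0 ≤ sSup S2 := by
    apply Real.sSup_nonneg
    rintro x ⟨v, -, rfl⟩
    positivity
  have hga : 0 ≤ ‖a‖ / β ^ 2 * ‖g‖ := by positivity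
  constructor
  · -- first inequality
    rw [hD1]
    by_cases hp : p = 0
    · rw [hp, norm_zero]
      have : 0 ≤ 1 / β * sSup S1 := by positivity
      linarith
    · have hppos : (0:ℝ) < ‖p‖ := norm_pos_iff.mpr hp
      obtain ⟨v, hbv, hvnorm⟩ := hBsurj (innerSL ℝ p)
      obtain ⟨ug, hbug, hugnorm⟩ := hBsurj g
      have hvnorm' : ‖v‖ ≤ (1 / β) * ‖p‖ := by
        rwa [innerSL_apply_norm] at hvnorm
      have hv0 : v ≠ 0 := by
        intro h0
        rw [h0] at hbv
        simp only [map_zero] at hbv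
        have := congrArg (fun (φ : Q →L[ℝ] ℝ) => φ p) hbv
        simp only [ContinuousLinearMap.zero_apply] at this
        have : (0:ℝ) = ‖p‖ ^ 2 := by
          rw [this]; simp [real_inner_self_eq_norm_sq]
        nlinarith
      have hvpos : (0:ℝ) < ‖v‖ := norm_pos_iff.mpr hv0
      -- u - ug ∈ K
      have huK : u - ug ∈ K := by
        rw [hK]
        intro q
        simp only [map_sub, ContinuousLinearMap.sub_apply]
        rw [hsol2 q, hbug]
        ring
      obtain ⟨hPv_mem, hwK⟩ := hproj v
      have hbw : ∀ q : Q, b (v - P v) q = 0 := by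
        rw [hK] at hwK; exact hwK
      -- key identity : ‖p‖^2 = f (P v) - a ug (P v)
      have hkey : ‖p‖ ^ 2 = f (P v) - a ug (P v) := by
        have h1 : ‖p‖ ^ 2 = b v p := by
          rw [hbv]; simp [real_inner_self_eq_norm_sq]
        have h2 : b v p = f v - a u v := by linarith [hsol1 v]
        have hfw : f (v - P v) = a u (v - P v) := by
          have := hsol1 (v - P v)
          rw [hbw p] at this; linarith
        have heq : P v + (v - P v) = v := by abel
        have hfv : f v = f (P v) + f (v - P v) := by
          conv_lhs => rw [← heq]
          rw [map_add]
        have hauv : a u v = a u (P v) + a u (v - P v) := by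
          conv_lhs => rw [← heq]
          rw [map_add]
        have haug : a u (P v) = a ug (P v) := by
          have hz : a (P v) (u - ug) = 0 := by
            rw [hKaperp] at hPv_mem
            exact hPv_mem _ huK
          rw [map_sub] at hz
          rw [hsym u (P v), hsym ug (P v)]
          linarith
        rw [h1, h2, hfv, hauv, hfw, haug]; ring
      -- bound |f (P v)|
      have hfPv : |f (P v)| ≤ sSup S1 * ‖v‖ := by
        have hmem : |f (P v)| / ‖v‖ ∈ S1 := ⟨v, ⟨Set.mem_univ v, hv0⟩, rfl⟩
        have := le_csSup hS1bdd hmem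
        rw [div_le_iff₀ hvpos] at this
        linarith
      -- bound |a ug (P v)|
      have haPv : |a ug (P v)| ≤ ‖a‖ * ‖ug‖ * ‖v‖ := by
        calc |a ug (P v)| ≤ Real.sqrt (a ug ug) * Real.sqrt (a (P v) (P v)) := hCS ug (P v)
          _ ≤ Real.sqrt (‖a‖ * ‖ug‖ ^ 2) * Real.sqrt (‖a‖ * ‖v‖ ^ 2) := by
              apply mul_le_mul (Real.sqrt_le_sqrt (ha_diag ug))
                (Real.sqrt_le_sqrt (le_trans (hPdiag v) (ha_diag v)))
                (Real.sqrt_nonneg _) (Real.sqrt_nonneg _)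
          _ = ‖a‖ * ‖ug‖ * ‖v‖ := by
              rw [Real.sqrt_mul (norm_nonneg a), Real.sqrt_mul (norm_nonneg a),
                Real.sqrt_sq (norm_nonneg ug), Real.sqrt_sq (norm_nonneg v)]
              have hs : Real.sqrt ‖a‖ * Real.sqrt ‖a‖ = ‖a‖ :=
                Real.mul_self_sqrt (norm_nonneg a)
              calc Real.sqrt ‖a‖ * ‖ug‖ * (Real.sqrt ‖a‖ * ‖v‖)
                  = (Real.sqrt ‖a‖ * Real.sqrt ‖a‖) * (‖ug‖ * ‖v‖) := by ring
                _ = ‖a‖ * ‖ug‖ * ‖v‖ := by rw [hs]; ring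
      have habs : ‖p‖ ^ 2 ≤ |f (P v)| + |a ug (P v)| := by
        rw [hkey]
        exact (le_abs_self _).trans (abs_sub _ _)
      have hb1 : sSup S1 * ‖v‖ ≤ sSup S1 * ((1/β) * ‖p‖) :=
        mul_le_mul_of_nonneg_left hvnorm' hD1nonneg
      have hb2 : ‖a‖ * ‖ug‖ * ‖v‖ ≤ (‖a‖ * ((1/β) * ‖g‖)) * ((1/β) * ‖p‖) := by
        apply mul_le_mul _ hvnorm' (norm_nonneg v) (by positivity)
        exact mul_le_mul_of_nonneg_left hugnorm (norm_nonneg a)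
      have hrw : (‖a‖ * ((1/β) * ‖g‖)) * ((1/β) * ‖p‖) = (‖a‖ / β^2 * ‖g‖) * ‖p‖ := by
        field_simp
      have hfinal : ‖p‖ * ‖p‖ ≤ (1/β * sSup S1 + ‖a‖ / β^2 * ‖g‖) * ‖p‖ := by
        rw [← pow_two]
        calc ‖p‖ ^ 2 ≤ |f (P v)| + |a ug (P v)| := habs
          _ ≤ sSup S1 * ‖v‖ + ‖a‖ * ‖ug‖ * ‖v‖ := add_le_add hfPv haPv
          _ ≤ sSup S1 * ((1/β) * ‖p‖) + (‖a‖ * ((1/β) * ‖g‖)) * ((1/β) * ‖p‖) :=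
              add_le_add hb1 hb2
          _ = (1/β * sSup S1 + ‖a‖ / β^2 * ‖g‖) * ‖p‖ := by rw [hrw]; ring
      exact le_of_mul_le_mul_right hfinal hppos
  · -- second inequality
    rw [hD1, hD2]
    have hmain : sSup S1 ≤ Real.sqrt (‖a‖ / α) * sSup S2 := by
      apply Real.sSup_le
      · rintro x ⟨v, ⟨-, hv0⟩, rfl⟩
        simp only [Set.mem_singleton_iff] at hv0
        have hvpos : (0:ℝ) < ‖v‖ := norm_pos_iff.mpr hv0
        show |f (P v)| / ‖v‖ ≤ Real.sqrt (‖a‖ / α) * sSup S2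
        by_cases hPv0 : P v = 0
        · rw [hPv0]
          simp only [map_zero, abs_zero, zero_div]
          positivity
        · have hPvpos : (0:ℝ) < ‖P v‖ := norm_pos_iff.mpr hPv0
          have hmem : |f (P v)| / ‖P v‖ ∈ S2 :=
            ⟨P v, ⟨(hproj v).1, hPv0⟩, rfl⟩
          have h1 : |f (P v)| ≤ sSup S2 * ‖P v‖ := by
            have := le_csSup hS2bdd hmem
            rw [div_le_iff₀ hPvpos] at this
            linarith
          rw [div_le_iff₀ hvpos]
          calc |f (P v)| ≤ sSup S2 * ‖P v‖ := h1
            _ ≤ sSup S2 * (Real.sqrt (‖a‖ / α) * ‖v‖) :=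
                mul_le_mul_of_nonneg_left (hPnorm v) hD2nonneg
            _ = Real.sqrt (‖a‖ / α) * sSup S2 * ‖v‖ := by ring
      · positivity
    have h1β : 0 ≤ 1/β := by positivity
    have := mul_le_mul_of_nonneg_left hmain h1β
    calc 1/β * sSup S1 + ‖a‖ / β^2 * ‖g‖
        ≤ 1/β * (Real.sqrt (‖a‖/α) * sSup S2) + ‖a‖/β^2 * ‖g‖ := by linarith
      _ = 1/β * Real.sqrt (‖a‖/α) * sSup S2 + ‖a‖/β^2 * ‖g‖ := by ring
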